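/- There is C > 0 such that for all h > 0 and all ξ ∈ Ω_h: |E^tr_0(ξ) − (3/2)|2πξ|²| ≤ Ch²|ξ|⁴, |E^hex_−(ξ) − (3/4)|2πξ|²| ≤ Ch²|ξ|⁴, and consequently |E^hex_−(ξ) − E^tr_0(ξ)/2| ≤ Ch²|ξ|⁴. -/

import Mathlib

open MeasureTheory Complex Filter Topology Matrix
open scoped FourierTransform RealInnerProductSpace ComplexConjugate

noncomputable section

abbrev R2 : Type := EuclideanSpace ℝ (Fin 2)

def v2 (a b : ℝ) : R2 := WithLp.toLp 2 ![a, b]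

def he1 : R2 := v2 (1/2) (Real.sqrt 3 / 2)
def he2 : R2 := v2 (1/2) (-(Real.sqrt 3) / 2)
def he3 : R2 := v2 (-1) 0
def hf1 : R2 := v2 (3/2) (Real.sqrt 3 / 2)
def hf2 : R2 := v2 (3/2) (-(Real.sqrt 3) / 2)
def hf1' : R2 := v2 (1/3) (Real.sqrt 3 / 3)
def hf2' : R2 := v2 (1/3) (-(Real.sqrt 3) / 3)

/-- `φ_f(ξ) = exp(2πi h f·ξ)`. -/
def phase (h : ℝ) (f ξ : R2) : ℂ :=
  Complex.exp (2 * Real.pi * Complex.I * (h : ℂ) * ((⟪f, ξ⟫ : ℝ) : ℂ))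

/-- `α(ξ) = 1 + φ_{f₁}(ξ) + φ_{f₂}(ξ)`. -/
def alphaHex (h : ℝ) (ξ : R2) : ℂ := 1 + phase h hf1 ξ + phase h hf2 ξ

/-- `E^hex_−(ξ) = h⁻²(3 − |α(ξ)|)`. -/
def EhexM (h : ℝ) (ξ : R2) : ℝ := (3 - ‖alphaHex h ξ‖) / h ^ 2

/-- `E^tr_0(ξ) = h⁻²(6 − 2∑_{j=1}^3 cos(2πh e_j·ξ))`. -/
def Etr (h : ℝ) (ξ : R2) : ℝ :=
  (6 - 2 * (Real.cos (2 * Real.pi * h * ⟪he1, ξ⟫) + Real.cos (2 * Real.pi * h * ⟪he2, ξ⟫) +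
    Real.cos (2 * Real.pi * h * ⟪he3, ξ⟫))) / h ^ 2

/-- The dual lattice `Γ'_h = ℤ(h⁻¹f₁') + ℤ(h⁻¹f₂')`. -/
def GammaDual (h : ℝ) : Set R2 :=
  {v | ∃ n₁ n₂ : ℤ, v = h⁻¹ • ((n₁ : ℝ) • hf1' + (n₂ : ℝ) • hf2')}

/-- The first Brillouin zone `Ω_h`. -/
def Omegah (h : ℝ) : Set R2 := {ξ | ∀ f' ∈ GammaDual h, f' ≠ 0 → ‖ξ‖ ≤ ‖ξ - f'‖}

/-! ### Auxiliary lemmas -/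

lemma sin_lower_aux {t : ℝ} (ht : 0 ≤ t) : t - t^3/6 ≤ Real.sin t := by
  have key : ∀ x : ℝ, HasDerivAt (fun s => Real.sin s - s + s^3/6) (Real.cos x - 1 + x^2/2) x := by
    intro x
    have h1 := ((Real.hasDerivAt_sin x).sub (hasDerivAt_id x)).add ((hasDerivAt_pow 3 x).div_const 6)
    exact h1.congr_deriv (by push_cast; ring)
  have mono : Monotone (fun s => Real.sin s - s + s^3/6) := by
    apply monotone_of_deriv_nonneg
    · exact fun x => (key x).differentiableAt
    · intro x
      rw [(key x).deriv]
      nlinarith [Real.one_sub_sq_div_two_le_cos (x := x)]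
  have h0 := mono ht
  simp only [Real.sin_zero] at h0
  norm_num at h0
  linarith

lemma cos_upper_aux (t : ℝ) : Real.cos t ≤ 1 - t^2/2 + t^4/24 := by
  wlog ht : 0 ≤ t with H
  · have := H (-t) (by linarith)
    have h4 : (-t)^4 = t^4 := by ring
    rw [← h4]; simpa using this
  have key : ∀ x : ℝ, HasDerivAt (fun s => 1 - s^2/2 + s^4/24 - Real.cos s)
      (-(x) + x^3/6 + Real.sin x) x := by
    intro x
    have h1 := ((((hasDerivAt_const x (1:ℝ)).sub ((hasDerivAt_pow 2 x).div_const 2)).add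
      ((hasDerivAt_pow 4 x).div_const 24)).sub (Real.hasDerivAt_cos x))
    exact h1.congr_deriv (by push_cast; ring)
  have mono : MonotoneOn (fun s => 1 - s^2/2 + s^4/24 - Real.cos s) (Set.Ici 0) := by
    apply monotoneOn_of_deriv_nonneg (convex_Ici 0)
    · exact (Continuous.continuousOn (by continuity))
    · intro x _
      exact (key x).differentiableAt.differentiableWithinAt
    · intro x hx
      rw [interior_Ici] at hx
      rw [(key x).deriv]
      have := sin_lower_aux (le_of_lt hx)
      linarith
  have h0 := mono (Set.self_mem_Ici) (Set.mem_Ici.2 ht) ht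
  simp only [Real.cos_zero] at h0
  norm_num at h0
  linarith

lemma sqrtBound_aux {S : ℝ} (hS : 0 ≤ S) (hS9 : 2*S ≤ 9) :
    0 ≤ 3 - Real.sqrt (9 - 2*S) - S/3 ∧ 3 - Real.sqrt (9 - 2*S) - S/3 ≤ 2*S^2/27 := by
  set u := Real.sqrt (9-2*S) with hu
  have hu0 : 0 ≤ u := Real.sqrt_nonneg _
  have hu2 : u^2 = 9 - 2*S := Real.sq_sqrt (by linarith)
  constructor
  · nlinarith [sq_nonneg (u-3)]
  · nlinarith [sq_nonneg (u-3), mul_nonneg hu0 (sq_nonneg (u-3)),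
      mul_nonneg (mul_nonneg hu0 hu0) (sq_nonneg (u-3))]

lemma term_bound4 {K c N2 M : ℝ} (hK : K^4 ≤ M) (hc : c^2 ≤ N2) :
    (K*c)^4 ≤ M * N2^2 := by
  have hc4 : c^4 ≤ N2^2 := by nlinarith [sq_nonneg c, sq_nonneg (c^2)]
  have hK0 : (0:ℝ) ≤ K^4 := by positivity
  have hc0 : (0:ℝ) ≤ c^4 := by positivity
  nlinarith [mul_le_mul hK hc4 hc0 (le_trans hK0 hK)]

lemma term_bound2 {K c N2 M : ℝ} (hK : K^2 ≤ M) (hc : c^2 ≤ N2) :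
    (K*c)^2 ≤ M * N2 := by
  nlinarith [mul_le_mul hK hc (sq_nonneg c) (le_trans (sq_nonneg K) hK)]

lemma phase_eq (h : ℝ) (f ξ : R2) :
    phase h f ξ = Complex.ofReal (Real.cos (2*Real.pi*h*⟪f,ξ⟫)) +
      Complex.ofReal (Real.sin (2*Real.pi*h*⟪f,ξ⟫)) * Complex.I := by
  rw [phase, show (2 * Real.pi * Complex.I * (h : ℂ) * ((⟪f, ξ⟫ : ℝ) : ℂ))
      = ((2*Real.pi*h*⟪f,ξ⟫ : ℝ) : ℂ) * Complex.I from by push_cast; ring,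
    Complex.exp_mul_I, ← Complex.ofReal_cos, ← Complex.ofReal_sin]

set_option maxHeartbeats 1000000 in
/-- Taylor expansions of the symbols: `E^tr_0(ξ) = (3/2)|2πξ|² + O(h²|ξ|⁴)`,
`E^hex_−(ξ) = (3/4)|2πξ|² + O(h²|ξ|⁴)`, and `E^hex_−(ξ) − E^tr_0(ξ)/2 = O(h²|ξ|⁴)` on `Ω_h`. -/
theorem hexagonal_symbol_expansions :
    ∃ C > (0 : ℝ), ∀ h : ℝ, 0 < h → ∀ ξ ∈ Omegah h,
      |Etr h ξ - 3 / 2 * (2 * Real.pi * ‖ξ‖) ^ 2| ≤ C * h ^ 2 * ‖ξ‖ ^ 4 ∧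
      |EhexM h ξ - 3 / 4 * (2 * Real.pi * ‖ξ‖) ^ 2| ≤ C * h ^ 2 * ‖ξ‖ ^ 4 ∧
      |EhexM h ξ - Etr h ξ / 2| ≤ C * h ^ 2 * ‖ξ‖ ^ 4 := by
  refine ⟨10000, by norm_num, ?_⟩
  intro h hh ξ _
  have h2 : (0:ℝ) < h^2 := by positivity
  set a : ℝ := ξ 0 with ha
  set b : ℝ := ξ 1 with hb
  have hs : (Real.sqrt 3)^2 = 3 := Real.sq_sqrt (by norm_num)
  have hN : ‖ξ‖^2 = a^2 + b^2 := by
    rw [EuclideanSpace.norm_eq, Real.sq_sqrt (by positivity)]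
    simp [Fin.sum_univ_two, sq_abs, ha, hb]
  have hN4 : ‖ξ‖^4 = (a^2+b^2)^2 := by
    rw [show ‖ξ‖^4 = (‖ξ‖^2)^2 from by ring, hN]
  have hip : ∀ x y : ℝ, ⟪(v2 x y : R2), ξ⟫ = x * a + y * b := by
    intro x y
    simp [v2, PiLp.inner_apply, Fin.sum_univ_two, RCLike.inner_apply, mul_comm, ha, hb]
  have hi1 : ⟪he1, ξ⟫ = (1/2) * a + (Real.sqrt 3 / 2) * b := by rw [he1]; exact hip _ _
  have hi2 : ⟪he2, ξ⟫ = (1/2) * a + (-(Real.sqrt 3) / 2) * b := by rw [he2]; exact hip _ _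
  have hi3 : ⟪he3, ξ⟫ = (-1) * a + 0 * b := by rw [he3]; exact hip _ _
  have hj1 : ⟪hf1, ξ⟫ = (3/2) * a + (Real.sqrt 3 / 2) * b := by rw [hf1]; exact hip _ _
  have hj2 : ⟪hf2, ξ⟫ = (3/2) * a + (-(Real.sqrt 3) / 2) * b := by rw [hf2]; exact hip _ _
  clear_value a b
  -- powers of 2πh
  have hpi4 : (2*Real.pi) ≤ 8 := by linarith only [Real.pi_le_four]
  have hK4 : (2*Real.pi*h)^4 ≤ 4096*h^4 := by
    have h8 : (2*Real.pi)^4 ≤ 4096 := by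
      have := pow_le_pow_left₀ (by positivity : (0:ℝ) ≤ 2*Real.pi) hpi4 4
      norm_num at this; linarith
    linarith only [mul_le_mul_of_nonneg_right h8 (pow_nonneg hh.le 4)]
  have hK2 : (2*Real.pi*h)^2 ≤ 64*h^2 := by
    have h8 : (2*Real.pi)^2 ≤ 64 := by
      have := pow_le_pow_left₀ (by positivity : (0:ℝ) ≤ 2*Real.pi) hpi4 2
      norm_num at this; linarith
    linarith only [mul_le_mul_of_nonneg_right h8 (pow_nonneg hh.le 2)]
  have hx : (2*Real.pi*‖ξ‖)^2 = 4*Real.pi^2*(a^2+b^2) := by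
    rw [mul_pow, mul_pow, hN]; ring
  have hposX : (0:ℝ) ≤ h^4*(a^2+b^2)^2 := by positivity
  have hposN : (0:ℝ) ≤ h^2*‖ξ‖^4 := by positivity
  ---- triangular part
  set t1 : ℝ := 2 * Real.pi * h * ⟪he1, ξ⟫ with ht1
  set t2 : ℝ := 2 * Real.pi * h * ⟪he2, ξ⟫ with ht2
  set t3 : ℝ := 2 * Real.pi * h * ⟪he3, ξ⟫ with ht3
  have ht1v : t1 = 2*Real.pi*h*((1/2) * a + (Real.sqrt 3 / 2) * b) := by rw [ht1, hi1]
  have ht2v : t2 = 2*Real.pi*h*((1/2) * a + (-(Real.sqrt 3) / 2) * b) := by rw [ht2, hi2]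
  have ht3v : t3 = 2*Real.pi*h*((-1) * a + 0 * b) := by rw [ht3, hi3]
  have hE : Etr h ξ = (6 - 2*(Real.cos t1 + Real.cos t2 + Real.cos t3))/h^2 := by
    rw [Etr, ← ht1, ← ht2, ← ht3]
  clear_value t1 t2 t3
  have hc1sq : ((1/2) * a + (Real.sqrt 3 / 2) * b)^2 ≤ a^2+b^2 := by
    nlinarith only [hs, sq_nonneg (Real.sqrt 3*a - b)]
  have hc2sq : ((1/2) * a + (-(Real.sqrt 3) / 2) * b)^2 ≤ a^2+b^2 := by
    nlinarith only [hs, sq_nonneg (Real.sqrt 3*a + b)]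
  have hc3sq : ((-1) * a + 0 * b)^2 ≤ a^2+b^2 := by nlinarith only [sq_nonneg b]
  have ht14 : t1^4 ≤ 4096*h^4*(a^2+b^2)^2 := by rw [ht1v]; exact term_bound4 hK4 hc1sq
  have ht24 : t2^4 ≤ 4096*h^4*(a^2+b^2)^2 := by rw [ht2v]; exact term_bound4 hK4 hc2sq
  have ht34 : t3^4 ≤ 4096*h^4*(a^2+b^2)^2 := by rw [ht3v]; exact term_bound4 hK4 hc3sq
  have cb1u : 1 - Real.cos t1 ≤ t1^2/2 := by linarith only [Real.one_sub_sq_div_two_le_cos (x := t1)]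
  have cb2u : 1 - Real.cos t2 ≤ t2^2/2 := by linarith only [Real.one_sub_sq_div_two_le_cos (x := t2)]
  have cb3u : 1 - Real.cos t3 ≤ t3^2/2 := by linarith only [Real.one_sub_sq_div_two_le_cos (x := t3)]
  have cb1l : t1^2/2 - t1^4/24 ≤ 1 - Real.cos t1 := by linarith only [cos_upper_aux t1]
  have cb2l : t2^2/2 - t2^4/24 ≤ 1 - Real.cos t2 := by linarith only [cos_upper_aux t2]
  have cb3l : t3^2/2 - t3^4/24 ≤ 1 - Real.cos t3 := by linarith only [cos_upper_aux t3]
  have hsum_t : t1^2 + t2^2 + t3^2 = 3/2*(2*Real.pi*‖ξ‖)^2*h^2 := by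
    rw [ht1v, ht2v, ht3v, hx]
    linear_combination (2*Real.pi^2*h^2*b^2) * hs
  have key1 : |Etr h ξ - 3/2*(2*Real.pi*‖ξ‖)^2| ≤ 2000*h^2*‖ξ‖^4 := by
    have hxx : 3/2*(2*Real.pi*‖ξ‖)^2 = (t1^2+t2^2+t3^2)/h^2 := by
      rw [hsum_t]; field_simp
    rw [hE, hxx, div_sub_div_same, abs_div, abs_of_pos h2, div_le_iff₀ h2, hN4]
    rw [abs_le]
    constructor
    · linarith only [cb1l, cb2l, cb3l, ht14, ht24, ht34, hposX]
    · linarith only [cb1u, cb2u, cb3u, hposX]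
  ---- hexagonal part
  set T1 : ℝ := 2 * Real.pi * h * ⟪hf1, ξ⟫ with hT1
  set T2 : ℝ := 2 * Real.pi * h * ⟪hf2, ξ⟫ with hT2
  have hT1v : T1 = 2*Real.pi*h*((3/2) * a + (Real.sqrt 3 / 2) * b) := by rw [hT1, hj1]
  have hT2v : T2 = 2*Real.pi*h*((3/2) * a + (-(Real.sqrt 3) / 2) * b) := by rw [hT2, hj2]
  have hT3v : T1 - T2 = 2*Real.pi*h*(Real.sqrt 3 * b) := by rw [hT1v, hT2v]; ring
  have hph1 : phase h hf1 ξ = Complex.ofReal (Real.cos T1) + Complex.ofReal (Real.sin T1) * Complex.I := by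
    rw [phase_eq h hf1 ξ, ← hT1]
  have hph2 : phase h hf2 ξ = Complex.ofReal (Real.cos T2) + Complex.ofReal (Real.sin T2) * Complex.I := by
    rw [phase_eq h hf2 ξ, ← hT2]
  clear_value T1 T2
  have habs2 : (‖alphaHex h ξ‖)^2
      = 9 - 2*((1 - Real.cos T1) + (1 - Real.cos T2) + (1 - Real.cos (T1 - T2))) := by
    rw [alphaHex, hph1, hph2, Complex.sq_norm, Complex.normSq_apply]
    simp only [Complex.add_re, Complex.add_im, Complex.mul_re, Complex.mul_im, Complex.one_re,
      Complex.one_im, Complex.ofReal_re, Complex.ofReal_im, Complex.I_re, Complex.I_im]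
    rw [Real.cos_sub]
    linear_combination Real.sin_sq_add_cos_sq T1 + Real.sin_sq_add_cos_sq T2
  set S : ℝ := (1 - Real.cos T1) + (1 - Real.cos T2) + (1 - Real.cos (T1 - T2)) with hSdef
  clear_value S
  have hS0 : 0 ≤ S := by
    rw [hSdef]
    linarith only [Real.cos_le_one T1, Real.cos_le_one T2, Real.cos_le_one (T1 - T2)]
  have hS9 : 2*S ≤ 9 := by
    have h0 := sq_nonneg (‖alphaHex h ξ‖)
    rw [habs2] at h0
    linarith only [h0]
  have habs : ‖alphaHex h ξ‖ = Real.sqrt (9 - 2*S) := by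
    rw [← habs2, Real.sqrt_sq (norm_nonneg _)]
  have hq1sq : ((3/2) * a + (Real.sqrt 3 / 2) * b)^2 ≤ 3*(a^2+b^2) := by
    nlinarith only [hs, sq_nonneg (Real.sqrt 3*a - 3*b)]
  have hq2sq : ((3/2) * a + (-(Real.sqrt 3) / 2) * b)^2 ≤ 3*(a^2+b^2) := by
    nlinarith only [hs, sq_nonneg (Real.sqrt 3*a + 3*b)]
  have hq3sq : (Real.sqrt 3 * b)^2 ≤ 3*(a^2+b^2) := by nlinarith only [hs, sq_nonneg a]
  have hT14 : T1^4 ≤ 4096*h^4*(3*(a^2+b^2))^2 := by rw [hT1v]; exact term_bound4 hK4 hq1sq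
  have hT24 : T2^4 ≤ 4096*h^4*(3*(a^2+b^2))^2 := by rw [hT2v]; exact term_bound4 hK4 hq2sq
  have hT34 : (T1-T2)^4 ≤ 4096*h^4*(3*(a^2+b^2))^2 := by rw [hT3v]; exact term_bound4 hK4 hq3sq
  have hT12 : T1^2 ≤ 64*h^2*(3*(a^2+b^2)) := by rw [hT1v]; exact term_bound2 hK2 hq1sq
  have hT22 : T2^2 ≤ 64*h^2*(3*(a^2+b^2)) := by rw [hT2v]; exact term_bound2 hK2 hq2sq
  have hT32 : (T1-T2)^2 ≤ 64*h^2*(3*(a^2+b^2)) := by rw [hT3v]; exact term_bound2 hK2 hq3sq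
  have Cb1u : 1 - Real.cos T1 ≤ T1^2/2 := by linarith only [Real.one_sub_sq_div_two_le_cos (x := T1)]
  have Cb2u : 1 - Real.cos T2 ≤ T2^2/2 := by linarith only [Real.one_sub_sq_div_two_le_cos (x := T2)]
  have Cb3u : 1 - Real.cos (T1-T2) ≤ (T1-T2)^2/2 := by
    linarith only [Real.one_sub_sq_div_two_le_cos (x := T1-T2)]
  have Cb1l : T1^2/2 - T1^4/24 ≤ 1 - Real.cos T1 := by linarith only [cos_upper_aux T1]
  have Cb2l : T2^2/2 - T2^4/24 ≤ 1 - Real.cos T2 := by linarith only [cos_upper_aux T2]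
  have Cb3l : (T1-T2)^2/2 - (T1-T2)^4/24 ≤ 1 - Real.cos (T1-T2) := by
    linarith only [cos_upper_aux (T1-T2)]
  have hSle : S ≤ 288*h^2*(a^2+b^2) := by
    rw [hSdef]; linarith only [Cb1u, Cb2u, Cb3u, hT12, hT22, hT32]
  have hS2 : S^2 ≤ 82944*h^4*(a^2+b^2)^2 := by
    have hBpos : (0:ℝ) ≤ 288*h^2*(a^2+b^2) := by positivity
    linarith only [mul_le_mul hSle hSle hS0 hBpos]
  have hTsum : T1^2 + T2^2 + (T1-T2)^2 = 6*(3/4*(2*Real.pi*‖ξ‖)^2*h^2) := by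
    rw [hT1v, hT2v, hx]
    linear_combination (6*Real.pi^2*h^2*b^2) * hs
  obtain ⟨sb1, sb2⟩ := sqrtBound_aux hS0 hS9
  have key2 : |EhexM h ξ - 3/4*(2*Real.pi*‖ξ‖)^2| ≤ 8000*h^2*‖ξ‖^4 := by
    have hEh : EhexM h ξ = (3 - Real.sqrt (9 - 2*S))/h^2 := by rw [EhexM, habs]
    have hxx : 3/4*(2*Real.pi*‖ξ‖)^2 = ((T1^2+T2^2+(T1-T2)^2)/6)/h^2 := by
      rw [hTsum]; field_simp
    rw [hEh, hxx, div_sub_div_same, abs_div, abs_of_pos h2, div_le_iff₀ h2, hN4]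
    have hSeq : S = (1 - Real.cos T1) + (1 - Real.cos T2) + (1 - Real.cos (T1 - T2)) := hSdef
    rw [abs_le]
    constructor
    · linarith only [sb1, Cb1l, Cb2l, Cb3l, hT14, hT24, hT34, hposX, hSeq]
    · linarith only [sb2, Cb1u, Cb2u, Cb3u, hS2, hposX, hSeq]
  ---- conclusion
  have key3 : |EhexM h ξ - Etr h ξ/2| ≤ 10000*h^2*‖ξ‖^4 := by
    have tri := abs_sub_le (EhexM h ξ) (3/4*(2*Real.pi*‖ξ‖)^2) (Etr h ξ/2)
    have heq : |3/4*(2*Real.pi*‖ξ‖)^2 - Etr h ξ/2| = |Etr h ξ - 3/2*(2*Real.pi*‖ξ‖)^2|/2 := by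
      rw [show 3/4*(2*Real.pi*‖ξ‖)^2 - Etr h ξ/2
          = -((Etr h ξ - 3/2*(2*Real.pi*‖ξ‖)^2)/2) from by ring, abs_neg, abs_div]
      norm_num
    rw [heq] at tri
    linarith only [key1, key2, tri, hposN]
  refine ⟨by linarith only [key1, hposN], by linarith only [key2, hposN], key3⟩

end
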